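/- Define ℓ(0) = 0 and, for n ≥ 1, ℓ(n) = 1 + max{i ∈ ℤ : d_i(n) = 1} (the length of the left part of the canonical φ-representation of n; note the maximum is a nonnegative integer for n ≥ 1). Then for every n ≥ 1, ℓ(n) − ℓ(n−1) ∈ {0, 1}; in particular ℓ is nondecreasing. -/
import Mathlib


/-- The golden ratio φ = (1+√5)/2. -/
noncomputable def phi : ℝ := (1 + Real.sqrt 5) / 2

/-- `a` is a finite φ-representation of the real number `x`: a finitely supported
function `a : ℤ → {0,1}` with `x = Σ_{i ∈ ℤ} a(i) · φ^i`. -/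
def IsPhiRep (x : ℝ) (a : ℤ →₀ ℕ) : Prop :=
  (∀ i, a i ≤ 1) ∧ x = ∑ i ∈ a.support, (a i : ℝ) * phi ^ i

/-- `a` is the canonical φ-representation of `x`: a finite φ-representation with
no two adjacent digits equal to 1. -/
def IsCanonRep (x : ℝ) (a : ℤ →₀ ℕ) : Prop :=
  IsPhiRep x a ∧ ∀ i : ℤ, a i * a (i + 1) = 0

lemma one_lt_phi : 1 < phi := by
  have h : (2:ℝ) ≤ Real.sqrt 5 := by
    rw [show (2:ℝ) = Real.sqrt 4 by rw [show (4:ℝ) = 2^2 by norm_num, Real.sqrt_sq]; norm_num]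
    exact Real.sqrt_le_sqrt (by norm_num)
  unfold phi; linarith

lemma phi_pos : 0 < phi := lt_trans one_pos one_lt_phi

lemma phi_sq : phi ^ 2 = phi + 1 := by
  have h : Real.sqrt 5 ^ 2 = 5 := Real.sq_sqrt (by norm_num)
  unfold phi; nlinarith [h]

lemma phi_zpow_rec (k : ℤ) : phi ^ (k + 2) = phi ^ (k + 1) + phi ^ k := by
  have h0 : phi ≠ 0 := ne_of_gt phi_pos
  have h2 : phi ^ (2:ℤ) = phi + 1 := by
    rw [show (2:ℤ) = (2:ℕ) by norm_num, zpow_natCast]; exact phi_sq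
  rw [zpow_add₀ h0 k 2, zpow_add₀ h0 k 1, h2, zpow_one]; ring

lemma sum_lt_aux (N : ℕ) : ∀ (a : ℤ →₀ ℕ), a.support.card ≤ N →
    (∀ i, a i ≤ 1) → (∀ i, a i * a (i + 1) = 0) →
    ∀ i : ℤ, (∀ j ∈ a.support, j ≤ i) →
    (∑ j ∈ a.support, (a j : ℝ) * phi ^ j) < phi ^ (i + 1) := by
  induction N with
  | zero =>
    intro a hcard _ _ i _
    have : a.support = ∅ := Finset.card_eq_zero.mp (Nat.le_zero.mp hcard)
    rw [this, Finset.sum_empty]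
    exact zpow_pos phi_pos _
  | succ N ih =>
    intro a hcard h1 h2 i hle
    rcases Finset.eq_empty_or_nonempty a.support with he | hne
    · rw [he, Finset.sum_empty]; exact zpow_pos phi_pos _
    · set m := a.support.max' hne with hm
      have hmmem : m ∈ a.support := a.support.max'_mem hne
      have ham : a m = 1 := by
        have := Finsupp.mem_support_iff.mp hmmem
        have := h1 m; omega
      have ham1 : a (m - 1) = 0 := by
        have := h2 (m - 1)
        rw [sub_add_cancel, ham] at this; omega
      set a' := a.erase m with ha'
      have hsupp : a'.support = a.support.erase m := Finsupp.support_erase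
      have hcard' : a'.support.card ≤ N := by
        rw [hsupp]
        have := Finset.card_erase_of_mem hmmem
        omega
      have h1' : ∀ j, a' j ≤ 1 := by
        intro j
        rcases eq_or_ne j m with rfl | hj
        · simp [ha', Finsupp.erase_same]
        · rw [ha', Finsupp.erase_ne hj]; exact h1 j
      have h2' : ∀ j, a' j * a' (j + 1) = 0 := by
        intro j
        rcases eq_or_ne j m with rfl | hj
        · simp [ha', Finsupp.erase_same]
        · rcases eq_or_ne (j + 1) m with hjm | hjm
          · rw [ha', Finsupp.erase_ne hj, hjm, Finsupp.erase_same]; omega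
          · rw [ha', Finsupp.erase_ne hj, Finsupp.erase_ne hjm]; exact h2 j
      have hle' : ∀ j ∈ a'.support, j ≤ m - 2 := by
        intro j hj
        rw [hsupp, Finset.mem_erase] at hj
        have hjle : j ≤ m := a.support.le_max' j hj.2
        have hjne1 : j ≠ m - 1 := by
          intro h
          have := Finsupp.mem_support_iff.mp hj.2
          rw [h] at this; exact this ham1
        have := hj.1
        omega
      have IH := ih a' hcard' h1' h2' (m - 2) hle'
      have hsum : (∑ j ∈ a.support, (a j : ℝ) * phi ^ j) =
          phi ^ m + ∑ j ∈ a'.support, (a' j : ℝ) * phi ^ j := by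
        rw [hsupp, ← Finset.add_sum_erase _ _ hmmem, ham]
        push_cast
        rw [one_mul]
        congr 1
        apply Finset.sum_congr rfl
        intro j hj
        rw [ha', Finsupp.erase_ne (Finset.mem_erase.mp hj).1]
      have hrec : phi ^ (m + 1) = phi ^ m + phi ^ (m - 1) := by
        have := phi_zpow_rec (m - 1)
        rw [show m - 1 + 2 = m + 1 by ring, show m - 1 + 1 = m by ring] at this
        exact this
      have hmle : phi ^ (m + 1) ≤ phi ^ (i + 1) :=
        zpow_le_zpow_right₀ one_lt_phi.le (by
          have := a.support.le_max' m hmmem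
          have := hle m hmmem; omega)
      have : phi ^ (m - 2 + 1) = phi ^ (m - 1) := by congr 1; ring
      rw [this] at IH
      linarith

lemma sum_lt (a : ℤ →₀ ℕ) (h1 : ∀ i, a i ≤ 1) (h2 : ∀ i, a i * a (i + 1) = 0)
    (i : ℤ) (hle : ∀ j ∈ a.support, j ≤ i) :
    (∑ j ∈ a.support, (a j : ℝ) * phi ^ j) < phi ^ (i + 1) :=
  sum_lt_aux a.support.card a le_rfl h1 h2 i hle

/-- Let `ℓ(0) = 0` and, for `n ≥ 1`, `ℓ(n) = 1 + max{i : d_i(n) = 1}` (the length of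
the left part of the canonical φ-representation of `n`). Then for every `n ≥ 1`,
`ℓ(n) - ℓ(n-1) ∈ {0, 1}`; in particular `ℓ` is nondecreasing. Here `d n` denotes the
canonical φ-representation of `n`, and `ℓ` is characterized by the hypotheses. -/
theorem length_diff_mem
    (d : ℕ → ℤ →₀ ℕ) (hd : ∀ n : ℕ, IsCanonRep n (d n))
    (ℓ : ℕ → ℕ) (hℓ0 : ℓ 0 = 0)
    (hℓ : ∀ n : ℕ, 1 ≤ n → ∃ i : ℤ, d n i = 1 ∧ (∀ j : ℤ, d n j = 1 → j ≤ i) ∧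
        (ℓ n : ℤ) = i + 1) :
    (∀ n : ℕ, 1 ≤ n → ℓ n = ℓ (n - 1) ∨ ℓ n = ℓ (n - 1) + 1) ∧ Monotone ℓ := by
  have key : ∀ n : ℕ, 1 ≤ n →
      phi ^ ((ℓ n : ℤ) - 1) ≤ (n : ℝ) ∧ (n : ℝ) < phi ^ (ℓ n : ℤ) := by
    intro n hn
    obtain ⟨i, hi1, himax, hiℓ⟩ := hℓ n hn
    obtain ⟨⟨hd1, hsum⟩, hd2⟩ := hd n
    have hle : ∀ j ∈ (d n).support, j ≤ i := by
      intro j hj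
      have hj0 := Finsupp.mem_support_iff.mp hj
      have := hd1 j
      exact himax j (by omega)
    have hup : (n : ℝ) < phi ^ (i + 1) := by
      rw [hsum]; exact sum_lt (d n) hd1 hd2 i hle
    have hlow : phi ^ i ≤ (n : ℝ) := by
      rw [hsum]
      have himem : i ∈ (d n).support := Finsupp.mem_support_iff.mpr (by omega)
      have : ((d n i : ℝ)) * phi ^ i ≤ ∑ j ∈ (d n).support, ((d n j : ℝ)) * phi ^ j :=
        Finset.single_le_sum (f := fun j => ((d n j : ℝ)) * phi ^ j)
          (fun j _ => mul_nonneg (Nat.cast_nonneg _) (zpow_pos phi_pos _).le) himem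
      rw [hi1] at this; push_cast at this; linarith
    constructor
    · rw [show (ℓ n : ℤ) - 1 = i by omega]; exact hlow
    · rw [show (ℓ n : ℤ) = i + 1 from hiℓ]; exact hup
  have claim : ∀ n : ℕ, 1 ≤ n → ℓ n = ℓ (n - 1) ∨ ℓ n = ℓ (n - 1) + 1 := by
    intro n hn
    rcases eq_or_lt_of_le hn with h1 | h2
    · -- n = 1
      obtain rfl : n = 1 := h1.symm
      have ⟨hl, _⟩ := key 1 le_rfl
      have : (ℓ 1 : ℤ) - 1 ≤ 0 := by
        by_contra h
        push_neg at h
        have : phi ^ (0 : ℤ) < phi ^ ((ℓ 1 : ℤ) - 1) :=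
          (zpow_lt_zpow_iff_right₀ one_lt_phi).mpr h
        rw [zpow_zero] at this
        push_cast at hl
        linarith
      simp only [show (1:ℕ) - 1 = 0 from rfl, hℓ0]
      omega
    · -- n ≥ 2
      set m := n - 1 with hmdef
      have hm : 1 ≤ m := by omega
      have hmn' : m + 1 = n := by omega
      have hnm : (n : ℝ) = (m : ℝ) + 1 := by rw [← hmn']; push_cast; ring
      obtain ⟨hlm, hum⟩ := key m hm
      obtain ⟨hln, hun⟩ := key n hn
      -- ℓ m ≥ 1
      have hℓm1 : 1 ≤ (ℓ m : ℤ) := by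
        by_contra h
        push_neg at h
        have : phi ^ (ℓ m : ℤ) ≤ phi ^ (0 : ℤ) :=
          zpow_le_zpow_right₀ one_lt_phi.le (by omega)
        rw [zpow_zero] at this
        have : (m : ℝ) < 1 := lt_of_lt_of_le hum this
        have : (1 : ℝ) ≤ (m : ℝ) := by exact_mod_cast hm
        linarith
      -- ℓ m ≤ ℓ n
      have hle1 : (ℓ m : ℤ) ≤ (ℓ n : ℤ) := by
        have hmn : (m : ℝ) < (n : ℝ) := by rw [hnm]; linarith
        have : phi ^ ((ℓ m : ℤ) - 1) < phi ^ (ℓ n : ℤ) := by linarith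
        have := (zpow_lt_zpow_iff_right₀ one_lt_phi).mp this
        omega
      -- ℓ n ≤ ℓ m + 1
      have hle2 : (ℓ n : ℤ) ≤ (ℓ m : ℤ) + 1 := by
        have hone : (1 : ℝ) ≤ phi ^ ((ℓ m : ℤ) - 1) :=
          one_le_zpow₀ one_lt_phi.le (by omega)
        have hrec : phi ^ ((ℓ m : ℤ) + 1) = phi ^ (ℓ m : ℤ) + phi ^ ((ℓ m : ℤ) - 1) := by
          have := phi_zpow_rec ((ℓ m : ℤ) - 1)
          rw [show (ℓ m : ℤ) - 1 + 2 = (ℓ m : ℤ) + 1 by ring,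
              show (ℓ m : ℤ) - 1 + 1 = (ℓ m : ℤ) by ring] at this
          exact this
        have : phi ^ ((ℓ n : ℤ) - 1) < phi ^ ((ℓ m : ℤ) + 1) := by
          rw [hrec, hnm] at *
          linarith
        have := (zpow_lt_zpow_iff_right₀ one_lt_phi).mp this
        omega
      omega
  refine ⟨claim, monotone_nat_of_le_succ fun n => ?_⟩
  have := claim (n + 1) (by omega)
  simp only [Nat.add_sub_cancel] at this
  omega
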